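/- Let f : X → ℝ be a nonnegative measurable function with ∫ f² dμ < ∞, and define f_k = min{ max(f − 2^k, 0), 2^k } for k ∈ ℤ. Then ∑_{k ∈ ℤ} ∫ f_k² dμ ≤ (1/2) ∫ f² dμ. -/

import Mathlib

open MeasureTheory

lemma real_key (a t : ℝ) (ha : 0 < a) (h1 : a ≤ t) (h2 : t ≤ 2*a) :
    (t - a)^2 + a^2/3 ≤ t^2/2 := by
  nlinarith [mul_nonneg (sub_nonneg.2 h1) (sub_nonneg.2 h2), sq_nonneg a, ha.le]

lemma geo_enn : ∑' n : ℕ, (ENNReal.ofReal ((1:ℝ)/4))^n = ENNReal.ofReal ((4:ℝ)/3) := by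
  rw [ENNReal.tsum_geometric]
  rw [show (1 : ENNReal) - ENNReal.ofReal ((1:ℝ)/4) = ENNReal.ofReal ((3:ℝ)/4) by
    rw [← ENNReal.ofReal_one, ← ENNReal.ofReal_sub _ (by norm_num)]; norm_num]
  rw [← ENNReal.ofReal_inv_of_pos (by norm_num)]
  norm_num

lemma key (t : ℝ) (ht : 0 ≤ t) :
    ∑' k : ℤ, ENNReal.ofReal ((min (max (t - (2:ℝ)^(k:ℝ)) 0) ((2:ℝ)^(k:ℝ)))^2)
      ≤ (1/2 : ENNReal) * ENNReal.ofReal (t^2) := by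
  have hrp : ∀ k : ℤ, (2:ℝ)^(k:ℝ) = (2:ℝ)^k := fun k => Real.rpow_intCast 2 k
  have h4 : ∀ k : ℤ, ((2:ℝ)^k)^2 = (4:ℝ)^k := by
    intro k; rw [sq, ← mul_zpow]; norm_num
  rcases eq_or_lt_of_le ht with h0 | h0
  · subst h0
    have hz : ∀ k : ℤ, min (max ((0:ℝ) - (2:ℝ)^(k:ℝ)) 0) ((2:ℝ)^(k:ℝ)) = 0 := by
      intro k
      rw [zero_sub, max_eq_right (neg_nonpos.2 (le_of_lt (by rw [hrp]; positivity))),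
        min_eq_left (by rw [hrp]; positivity)]
    have hz2 : ∀ k : ℤ,
        ENNReal.ofReal ((min (max ((0:ℝ) - (2:ℝ)^(k:ℝ)) 0) ((2:ℝ)^(k:ℝ)))^2) = 0 := by
      intro k; rw [hz k]; simp
    rw [tsum_congr hz2]
    simp
  set K := Int.log 2 t with hKdef
  have hK1 : (2:ℝ)^K ≤ t := by
    have := Int.zpow_log_le_self (b := 2) (R := ℝ) (by norm_num) h0
    exact_mod_cast this
  have hK2 : t < (2:ℝ)^(K+1) := by
    have := Int.lt_zpow_succ_log_self (b := 2) (R := ℝ) (by norm_num) t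
    exact_mod_cast this
  have ha : (0:ℝ) < (2:ℝ)^K := by positivity
  have hta : t ≤ 2*(2:ℝ)^K := by
    have h2 : (2:ℝ)^(K+1) = 2*(2:ℝ)^K := by
      rw [zpow_add_one₀ (by norm_num : (2:ℝ) ≠ 0)]; ring
    linarith
  have hbound : ∀ k : ℤ,
      ENNReal.ofReal ((min (max (t - (2:ℝ)^(k:ℝ)) 0) ((2:ℝ)^(k:ℝ)))^2)
        ≤ (fun k : ℤ => if k = K then ENNReal.ofReal ((t - (2:ℝ)^K)^2) else 0) k
          + (fun k : ℤ => if k < K then ENNReal.ofReal ((4:ℝ)^k) else 0) k := by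
    intro k
    simp only [hrp]
    rcases lt_trichotomy k K with hk | hk | hk
    · have hmin : min (max (t - (2:ℝ)^k) 0) ((2:ℝ)^k) ≤ (2:ℝ)^k := min_le_right _ _
      have hnn : 0 ≤ min (max (t - (2:ℝ)^k) 0) ((2:ℝ)^k) :=
        le_min (le_max_right _ _) (by positivity)
      have hsq : (min (max (t - (2:ℝ)^k) 0) ((2:ℝ)^k))^2 ≤ (4:ℝ)^k := by
        rw [← h4 k]; exact pow_le_pow_left₀ hnn hmin 2
      simp only [if_pos hk, if_neg (by omega : ¬ k = K)]
      exact le_add_of_nonneg_of_le zero_le (ENNReal.ofReal_le_ofReal hsq)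
    · subst hk
      have hnn : 0 ≤ min (max (t - (2:ℝ)^K) 0) ((2:ℝ)^K) :=
        le_min (le_max_right _ _) (by positivity)
      have hmin : min (max (t - (2:ℝ)^K) 0) ((2:ℝ)^K) ≤ t - (2:ℝ)^K :=
        le_trans (min_le_left _ _) (le_of_eq (max_eq_left (by linarith)))
      have hsq : (min (max (t - (2:ℝ)^K) 0) ((2:ℝ)^K))^2 ≤ (t - (2:ℝ)^K)^2 :=
        pow_le_pow_left₀ hnn hmin 2
      simp only [if_pos rfl, if_neg (lt_irrefl K)]
      exact le_add_of_le_of_nonneg (ENNReal.ofReal_le_ofReal hsq) zero_le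
    · have h2k : t - (2:ℝ)^k ≤ 0 := by
        have : (2:ℝ)^(K+1) ≤ (2:ℝ)^k := zpow_le_zpow_right₀ (by norm_num) (by omega)
        linarith
      rw [max_eq_right h2k, min_eq_left (by positivity)]
      simp
  calc ∑' k : ℤ, ENNReal.ofReal ((min (max (t - (2:ℝ)^(k:ℝ)) 0) ((2:ℝ)^(k:ℝ)))^2)
      ≤ ∑' k : ℤ, ((fun k : ℤ => if k = K then ENNReal.ofReal ((t - (2:ℝ)^K)^2) else 0) k
          + (fun k : ℤ => if k < K then ENNReal.ofReal ((4:ℝ)^k) else 0) k) :=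
        ENNReal.tsum_le_tsum hbound
    _ = ENNReal.ofReal ((t - (2:ℝ)^K)^2) + ∑' k : ℤ, (fun k : ℤ =>
          if k < K then ENNReal.ofReal ((4:ℝ)^k) else 0) k := by
        rw [ENNReal.tsum_add, tsum_ite_eq]
    _ = ENNReal.ofReal ((t - (2:ℝ)^K)^2)
          + ENNReal.ofReal ((4:ℝ)^(K-1)) * ENNReal.ofReal ((4:ℝ)/3) := by
        congr 1
        have hinj : Function.Injective (fun n : ℕ => K - 1 - (n:ℤ)) := by
          intro m n h; simpa using h
        have hsupp : Function.support (fun k : ℤ =>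
            if k < K then ENNReal.ofReal ((4:ℝ)^k) else 0)
            ⊆ Set.range (fun n : ℕ => K - 1 - (n:ℤ)) := by
          intro k hk
          simp only [Function.mem_support, ne_eq, ite_eq_right_iff, not_forall] at hk
          obtain ⟨hkK, -⟩ := hk
          exact ⟨(K - 1 - k).toNat, by simp; omega⟩
        rw [← hinj.tsum_eq hsupp]
        have hterm : ∀ n : ℕ,
            (if K - 1 - (n:ℤ) < K then ENNReal.ofReal ((4:ℝ)^(K-1-(n:ℤ))) else 0)
            = ENNReal.ofReal ((4:ℝ)^(K-1)) * (ENNReal.ofReal ((1:ℝ)/4))^n := by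
          intro n
          rw [if_pos (by omega)]
          rw [zpow_sub₀ (by norm_num : (4:ℝ) ≠ 0), ← ENNReal.ofReal_pow (by norm_num),
            ← ENNReal.ofReal_mul (by positivity)]
          congr 1
          rw [div_pow, one_pow, zpow_natCast]
          ring
        simp only [hterm]
        rw [ENNReal.tsum_mul_left, geo_enn]
    _ = ENNReal.ofReal ((t - (2:ℝ)^K)^2 + (4:ℝ)^(K-1) * ((4:ℝ)/3)) := by
        rw [← ENNReal.ofReal_mul (by positivity),
          ← ENNReal.ofReal_add (by positivity) (by positivity)]
    _ ≤ (1/2 : ENNReal) * ENNReal.ofReal (t^2) := by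
        rw [show (1/2 : ENNReal) = ENNReal.ofReal ((1:ℝ)/2) by
            rw [ENNReal.ofReal_div_of_pos (by norm_num)]; norm_num,
          ← ENNReal.ofReal_mul (by norm_num)]
        apply ENNReal.ofReal_le_ofReal
        have h41 : (4:ℝ)^(K-1) * ((4:ℝ)/3) = ((2:ℝ)^K)^2/3 := by
          rw [h4 K, show K = (K-1) + 1 by ring, zpow_add_one₀ (by norm_num : (4:ℝ) ≠ 0)]
          ring_nf
        rw [h41]
        have := real_key ((2:ℝ)^K) t ha hK1 hta
        linarith

/-- Layer-cake estimate: for the dyadic truncations `f_k = min (max (f − 2^k) 0) (2^k)` of a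
nonnegative measurable function with `∫ f² dμ < ∞`,
`∑_{k ∈ ℤ} ∫ f_k² dμ ≤ (1/2) ∫ f² dμ`. -/
theorem tsum_sq_truncation_le_half {X : Type*} [MeasurableSpace X] (μ : Measure X)
    (f : X → ℝ) (hf : Measurable f) (hf0 : ∀ x, 0 ≤ f x)
    (hfin : ∫⁻ x, ENNReal.ofReal (f x ^ 2) ∂μ < ⊤) :
    ∑' k : ℤ, ∫⁻ x,
        ENNReal.ofReal ((min (max (f x - (2 : ℝ) ^ (k : ℝ)) 0) ((2 : ℝ) ^ (k : ℝ))) ^ 2) ∂μ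
      ≤ (1 / 2) * ∫⁻ x, ENNReal.ofReal (f x ^ 2) ∂μ := by
  have hmeas : ∀ k : ℤ, Measurable fun x =>
      ENNReal.ofReal ((min (max (f x - (2 : ℝ) ^ (k : ℝ)) 0) ((2 : ℝ) ^ (k : ℝ))) ^ 2) := by
    intro k
    exact ((((hf.sub measurable_const).max measurable_const).min
      measurable_const).pow measurable_const).ennreal_ofReal
  calc ∑' k : ℤ, ∫⁻ x,
        ENNReal.ofReal ((min (max (f x - (2 : ℝ) ^ (k : ℝ)) 0) ((2 : ℝ) ^ (k : ℝ))) ^ 2) ∂μ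
      = ∫⁻ x, ∑' k : ℤ,
        ENNReal.ofReal ((min (max (f x - (2 : ℝ) ^ (k : ℝ)) 0) ((2 : ℝ) ^ (k : ℝ))) ^ 2) ∂μ :=
        (lintegral_tsum fun k => (hmeas k).aemeasurable).symm
    _ ≤ ∫⁻ x, (1/2 : ENNReal) * ENNReal.ofReal (f x ^ 2) ∂μ :=
        lintegral_mono fun x => key (f x) (hf0 x)
    _ = (1 / 2) * ∫⁻ x, ENNReal.ofReal (f x ^ 2) ∂μ :=
        lintegral_const_mul _ (hf.pow measurable_const).ennreal_ofReal
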